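/- Let U be an open subset of the positive reals and let (x_n)_{n≥1} be a sequence of positive reals with x_n ∈ U for all n and x_n → 0. Then there exists a strictly decreasing subsequence (y_n)_{n≥1} of (x_n)_{n≥1} such that every finite sum ∑_{i∈F} y_i, over every finite nonempty set F of indices, lies in U. -/

import Mathlib

/-- If `U` is an open subset of the positive reals and `(x_n)` is a sequence of elements
of `U` tending to `0`, then there is a strictly decreasing subsequence all of whose
finite sums lie in `U`. -/
theorem stmt_9 (U : Set ℝ) (hU : IsOpen U) (hUpos : U ⊆ Set.Ioi 0)
    (x : ℕ → ℝ) (hx : ∀ n, x n ∈ U)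
    (hlim : Filter.Tendsto x Filter.atTop (nhds 0)) :
    ∃ n : ℕ → ℕ, StrictMono n ∧ StrictAnti (fun k => x (n k)) ∧
      ∀ F : Finset ℕ, F.Nonempty → (∑ i ∈ F, x (n i)) ∈ U := by
  have xpos : ∀ n, 0 < x n := fun n => hUpos (hx n)
  -- step existence
  have step : ∀ (m : ℕ) (ε : ℝ), ∃ (m' : ℕ) (ε' : ℝ), 0 < ε →
      (m < m' ∧ 0 < ε' ∧ x m' < ε/2 ∧ x m' < x m ∧ ε' ≤ ε/2 ∧
        Metric.ball (x m') ε' ⊆ U) := by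
    intro m ε
    by_cases hε : 0 < ε
    · have h1 : ∀ᶠ k in Filter.atTop, x k < min (ε/2) (x m) :=
        hlim.eventually (gt_mem_nhds (lt_min (by linarith) (xpos m)))
      obtain ⟨a, ha⟩ := Filter.eventually_atTop.1 h1
      set m' := max a (m+1) with hm'
      have hxm' : x m' < min (ε/2) (x m) := ha m' (le_max_left _ _)
      obtain ⟨δ, hδ, hball⟩ := Metric.isOpen_iff.1 hU _ (hx m')
      refine ⟨m', min δ (ε/2), fun _ => ⟨?_, ?_, ?_, ?_, ?_, ?_⟩⟩
      · exact lt_of_lt_of_le (Nat.lt_succ_self m) (le_max_right _ _)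
      · exact lt_min hδ (by linarith)
      · exact lt_of_lt_of_le hxm' (min_le_left _ _)
      · exact lt_of_lt_of_le hxm' (min_le_right _ _)
      · exact min_le_right _ _
      · exact fun t ht => hball (Metric.ball_subset_ball (min_le_left _ _) ht)
    · exact ⟨0, 0, fun h => absurd h hε⟩
  choose g E hgE using step
  obtain ⟨ε₀, hε₀, hball₀⟩ := Metric.isOpen_iff.1 hU _ (hx 0)
  let f : ℕ → ℕ × ℝ := fun k => Nat.rec ((0:ℕ), ε₀) (fun _ p => (g p.1 p.2, E p.1 p.2)) k
  have hf0 : f 0 = (0, ε₀) := rfl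
  have hfs1 : ∀ k, (f (k+1)).1 = g (f k).1 (f k).2 := fun k => rfl
  have hfs2 : ∀ k, (f (k+1)).2 = E (f k).1 (f k).2 := fun k => rfl
  -- invariant
  have inv : ∀ k, 0 < (f k).2 ∧ ∀ F : Finset ℕ, F.Nonempty → F ⊆ Finset.range (k+1) →
      Metric.ball (∑ i ∈ F, x ((f i).1)) (f k).2 ⊆ U := by
    intro k
    induction k with
    | zero =>
      refine ⟨hε₀, fun F hF hFsub => ?_⟩
      have : F = {0} := by
        apply Finset.eq_singleton_iff_nonempty_unique_mem.2 ⟨hF, ?_⟩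
        intro a ha
        have := hFsub ha
        simp [Finset.mem_range] at this
        omega
      subst this
      simpa [hf0] using hball₀
    | succ k ih =>
      obtain ⟨hεpos, hballs⟩ := ih
      obtain ⟨hlt, hε'pos, hsmall, hdec, hhalf, hball'⟩ := hgE (f k).1 (f k).2 hεpos
      rw [← hfs1 k] at hlt hsmall hdec hball'
      rw [← hfs2 k] at hε'pos hhalf hball'
      refine ⟨hε'pos, fun F hF hFsub => ?_⟩
      by_cases hmem : (k+1) ∈ F
      · set F' := F.erase (k+1) with hF'
        have hsum : x ((f (k+1)).1) + ∑ i ∈ F', x ((f i).1) = ∑ i ∈ F, x ((f i).1) :=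
          Finset.add_sum_erase F (fun i => x (f i).1) hmem
        by_cases hF'ne : F'.Nonempty
        · have hF'sub : F' ⊆ Finset.range (k+1) := by
            intro a ha
            have h1 := hFsub (Finset.mem_of_mem_erase ha)
            have h2 := Finset.ne_of_mem_erase ha
            simp [Finset.mem_range] at h1 ⊢
            omega
          have hb := hballs F' hF'ne hF'sub
          intro t ht
          apply hb
          rw [Metric.mem_ball, Real.dist_eq] at ht ⊢
          have h1 := abs_lt.1 ht
          have h2 : (0:ℝ) < x ((f (k+1)).1) := xpos _
          rw [← hsum] at h1
          rw [abs_lt]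
          constructor <;> [skip; skip] <;>
            · cases h1 with
              | intro hl hr => nlinarith [hε'pos, hhalf, hsmall]
        · have hFe : F = {k+1} := by
            rw [Finset.not_nonempty_iff_eq_empty] at hF'ne
            have := (Finset.erase_eq_empty_iff F (k+1)).1 hF'ne
            rcases this with h | h
            · subst h; simp at hmem
            · exact h
          subst hFe
          simpa using hball'
      · have hFsub' : F ⊆ Finset.range (k+1) := by
          intro a ha
          have h1 := hFsub ha
          simp [Finset.mem_range] at h1 ⊢
          rcases Nat.lt_or_eq_of_le h1 with h | h
          · omega
          · exact absurd (h ▸ ha) hmem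
        exact fun t ht => hballs F hF hFsub' (Metric.ball_subset_ball (by linarith) ht)
  refine ⟨fun k => (f k).1, ?_, ?_, ?_⟩
  · apply strictMono_nat_of_lt_succ
    intro k
    obtain ⟨hεpos, _⟩ := inv k
    obtain ⟨hlt, _, _, _, _, _⟩ := hgE (f k).1 (f k).2 hεpos
    rw [← hfs1 k] at hlt
    exact hlt
  · apply strictAnti_nat_of_succ_lt
    intro k
    obtain ⟨hεpos, _⟩ := inv k
    obtain ⟨_, _, _, hdec, _, _⟩ := hgE (f k).1 (f k).2 hεpos
    rw [← hfs1 k] at hdec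
    exact hdec
  · intro F hF
    set k := F.max' hF with hk
    obtain ⟨hεpos, hballs⟩ := inv k
    have hFsub : F ⊆ Finset.range (k+1) := by
      intro a ha
      simp [Finset.mem_range, Nat.lt_succ_iff]
      exact Finset.le_max' F a ha
    exact hballs F hF hFsub (Metric.mem_ball_self hεpos)
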